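/- Let μ1, μ2, μ3, μ4, μ5, μ6, λ1, λ2 ∈ ℝ satisfy λ1 = μ2 − μ3, λ2 = μ5 − μ6, and Parodi's relation μ2 + μ3 = μ6 − μ5. Let A be a real symmetric 2×2 matrix, Ω a real skew-symmetric 2×2 matrix, and d̂, N̂ ∈ ℝ². Define the 2×2 matrix σ with entries σ_{ij} = μ1 (d̂ᵀAd̂) d̂_i d̂_j + μ2 N̂_i d̂_j + μ3 N̂_j d̂_i + μ4 A_{ij} + μ5 (Ad̂)_i d̂_j + μ6 (Ad̂)_j d̂_i. Then Σ_{i,j=1}^{2} σ_{ij}(A_{ij} + Ω_{ij}) = μ1 (d̂ᵀAd̂)² + μ4 Σ_{i,j} A_{ij}² + (μ5 + μ6)|Ad̂|² + λ1 ⟨N̂, Ωd̂⟩ − λ2 ⟨N̂, Ad̂⟩ + λ2 ⟨Ad̂, Ωd̂⟩. -/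
import Mathlib


open Finset Matrix

/-- **Leslie stress contraction identity.**
Under the relations `lam1 = μ2 − μ3`, `lam2 = μ5 − μ6` and Parodi's relation
`μ2 + μ3 = μ6 − μ5`, for a symmetric matrix `A`, a skew-symmetric matrix `Ω`,
and vectors `dh, Nh ∈ ℝ²`, the contraction of the Leslie stress tensor `σ`
against `A + Ω` equals
`μ1 (d̂ᵀAd̂)² + μ4 |A|² + (μ5+μ6)|Ad̂|² + lam1⟨N̂,Ωd̂⟩ − lam2⟨N̂,Ad̂⟩ + lam2⟨Ad̂,Ωd̂⟩`. -/
theorem leslie_stress_contraction_identity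
    (μ1 μ2 μ3 μ4 μ5 μ6 lam1 lam2 : ℝ)
    (hlam1 : lam1 = μ2 - μ3) (hlam2 : lam2 = μ5 - μ6) (hParodi : μ2 + μ3 = μ6 - μ5)
    (A Ω : Matrix (Fin 2) (Fin 2) ℝ)
    (hA : A.IsSymm) (hΩ : Ωᵀ = -Ω)
    (dh Nh : Fin 2 → ℝ)
    (σ : Matrix (Fin 2) (Fin 2) ℝ)
    (hσ : ∀ i j, σ i j =
      μ1 * (∑ k, ∑ l, A k l * dh k * dh l) * dh i * dh j
      + μ2 * Nh i * dh j + μ3 * Nh j * dh i + μ4 * A i j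
      + μ5 * (∑ k, A i k * dh k) * dh j + μ6 * (∑ k, A j k * dh k) * dh i) :
    ∑ i, ∑ j, σ i j * (A i j + Ω i j)
      = μ1 * (∑ k, ∑ l, A k l * dh k * dh l) ^ 2
        + μ4 * (∑ i, ∑ j, (A i j) ^ 2)
        + (μ5 + μ6) * (∑ i, (∑ j, A i j * dh j) ^ 2)
        + lam1 * (∑ i, Nh i * (∑ j, Ω i j * dh j))
        - lam2 * (∑ i, Nh i * (∑ j, A i j * dh j))
        + lam2 * (∑ i, (∑ j, A i j * dh j) * (∑ k, Ω i k * dh k)) := by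
  have hA01 : A 1 0 = A 0 1 := by
    have := congrFun (congrFun hA 0) 1; simpa [Matrix.transpose_apply] using this
  have hΩ00 : Ω 0 0 = 0 := by
    have := congrFun (congrFun hΩ 0) 0; simp [Matrix.transpose_apply] at this; linarith
  have hΩ11 : Ω 1 1 = 0 := by
    have := congrFun (congrFun hΩ 1) 1; simp [Matrix.transpose_apply] at this; linarith
  have hΩ10 : Ω 1 0 = -Ω 0 1 := by
    have := congrFun (congrFun hΩ 0) 1; simp [Matrix.transpose_apply] at this; linarith
  subst hlam1 hlam2
  simp only [hσ, Fin.sum_univ_two, hA01, hΩ00, hΩ11, hΩ10]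
  linear_combination (Nh 0 * (A 0 0 * dh 0 + A 0 1 * dh 1)
    + Nh 1 * (A 0 1 * dh 0 + A 1 1 * dh 1)) * hParodi
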